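/- Let m be an odd positive integer and let a(X), b(X) ∈ R_m. Set g_{a,b}(X) = gcd(a(X), b(X), X^m − 1) in (Z/2)[X] and h_{a,b}(X) = (X^m − 1)/g_{a,b}(X). Then the map sending c(X) in the ideal ⟨g_{a,b}(X)⟩ of R_m to (c(X)a(X), 2(c(X)b(X))) is an R_m-module isomorphism from ⟨g_{a,b}(X)⟩ onto C_{a,b}; in particular, the dimension of C_{a,b} as a vector space over Z/2 equals deg h_{a,b}(X). -/

import Mathlib

open Polynomial

noncomputable section

/-- The polynomial `X^m - 1` over `Z/2`. -/
def fm (m : ℕ) : Polynomial (ZMod 2) := X ^ m - 1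

/-- The polynomial `X^m - 1` over `Z/4`. -/
def fm4 (m : ℕ) : Polynomial (ZMod 4) := X ^ m - 1

/-- `R_m = (Z/2)[X]/⟨X^m - 1⟩`. -/
abbrev R2 (m : ℕ) : Type := Polynomial (ZMod 2) ⧸ Ideal.span {fm m}

/-- `R'_m = (Z/4)[X]/⟨X^m - 1⟩`. -/
abbrev R4 (m : ℕ) : Type := Polynomial (ZMod 4) ⧸ Ideal.span {fm4 m}

def mk2 (m : ℕ) : Polynomial (ZMod 2) →+* R2 m := Ideal.Quotient.mk _

def mk4 (m : ℕ) : Polynomial (ZMod 4) →+* R4 m := Ideal.Quotient.mk _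

/-- The canonical representative (of degree `< m`) of an element of `R2 m`. -/
def rep2 (m : ℕ) (r : R2 m) : Polynomial (ZMod 2) :=
  (Function.surjInv (Ideal.Quotient.mk_surjective (I := Ideal.span {fm m})) r) %ₘ fm m

/-- Coefficientwise doubling map `(Z/2)[X] → (Z/4)[X]`, `a ↦ 2a` on each coefficient. -/
def polyDbl (p : Polynomial (ZMod 2)) : Polynomial (ZMod 4) :=
  ∑ i ∈ p.support, Polynomial.C (2 * ((p.coeff i).val : ZMod 4)) * X ^ i

/-- The additive embedding `R_m → R'_m`, `f ↦ 2f`. -/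
def iota (m : ℕ) (r : R2 m) : R4 m := mk4 m (polyDbl (rep2 m r))

/-- The `Z2Z4`-additive cyclic code `C_{a,b} = {(f·a, 2(f·b)) : f ∈ R_m}`. -/
def Cab (m : ℕ) (a b : R2 m) : Set (R2 m × R4 m) :=
  {w | ∃ f : R2 m, w = (f * a, iota m (f * b))}

/-- Dimension of `C_{a,b}` as a vector space over `Z/2`, i.e. `log₂ |C_{a,b}|`. -/
def dimCab (m : ℕ) (a b : R2 m) : ℕ := Nat.log 2 (Nat.card (Cab m a b))

-- basics
lemma fm_monic {m : ℕ} (hm : 0 < m) : (fm m).Monic := by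
  simpa [fm] using monic_X_pow_sub_C (1 : ZMod 2) hm.ne'

lemma fm4_monic {m : ℕ} (hm : 0 < m) : (fm4 m).Monic := by
  simpa [fm4] using monic_X_pow_sub_C (1 : ZMod 4) hm.ne'

lemma fm_degree {m : ℕ} (hm : 0 < m) : (fm m).degree = m := by
  simpa [fm] using degree_X_pow_sub_C hm (1 : ZMod 2)

lemma fm4_degree {m : ℕ} (hm : 0 < m) : (fm4 m).degree = m := by
  haveI : Fact (1 < 4) := ⟨by norm_num⟩
  simpa [fm4] using degree_X_pow_sub_C hm (1 : ZMod 4)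

lemma fm_ne_zero {m : ℕ} (hm : 0 < m) : fm m ≠ 0 := (fm_monic hm).ne_zero

lemma mk2_fm (m : ℕ) : mk2 m (fm m) = 0 := by
  simp [mk2, Ideal.Quotient.eq_zero_iff_mem, Ideal.mem_span_singleton]

lemma mk2_rep2 {m : ℕ} (hm : 0 < m) (r : R2 m) : mk2 m (rep2 m r) = r := by
  have hsur : mk2 m (Function.surjInv (Ideal.Quotient.mk_surjective (I := Ideal.span {fm m})) r) = r :=
    Function.surjInv_eq _ r
  have := Polynomial.modByMonic_add_div
    (Function.surjInv (Ideal.Quotient.mk_surjective (I := Ideal.span {fm m})) r) (fm m)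
  calc mk2 m (rep2 m r) = mk2 m (rep2 m r) + mk2 m (fm m) * mk2 m (_ /ₘ fm m) := by
        rw [mk2_fm]; ring
    _ = r := by rw [← map_mul, ← map_add, rep2, this, hsur]

lemma rep2_degree_lt {m : ℕ} (hm : 0 < m) (r : R2 m) : (rep2 m r).degree < m := by
  rw [← fm_degree hm]
  exact degree_modByMonic_lt _ (fm_monic hm)

lemma eq_of_mk2_eq {m : ℕ} (hm : 0 < m) {p q : Polynomial (ZMod 2)}
    (hp : p.degree < m) (hq : q.degree < m) (h : mk2 m p = mk2 m q) : p = q := by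
  have hd : fm m ∣ p - q := by
    rwa [mk2, Ideal.Quotient.mk_eq_mk_iff_sub_mem, Ideal.mem_span_singleton] at h
  have : p - q = 0 := by
    refine eq_zero_of_dvd_of_degree_lt hd ?_
    rw [fm_degree hm]
    exact lt_of_le_of_lt (degree_sub_le p q) (max_lt hp hq)
  exact sub_eq_zero.mp this


lemma coeff_polyDbl (p : Polynomial (ZMod 2)) (n : ℕ) :
    (polyDbl p).coeff n = 2 * ((p.coeff n).val : ZMod 4) := by
  classical
  unfold polyDbl
  rw [finset_sum_coeff]
  simp only [coeff_C_mul, coeff_X_pow, mul_ite, mul_one, mul_zero]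
  rw [Finset.sum_ite_eq p.support n (fun i => 2 * ((p.coeff i).val : ZMod 4))]
  split_ifs with hmem
  · rfl
  · rw [Polynomial.notMem_support_iff.mp hmem]
    simp

lemma polyDbl_sub (p q : Polynomial (ZMod 2)) :
    polyDbl p - polyDbl q = polyDbl (p - q) := by
  ext n
  simp only [coeff_sub, coeff_polyDbl]
  have : ∀ a b : ZMod 2, 2 * ((a:ZMod 2).val : ZMod 4) - 2 * (b.val : ZMod 4)
      = 2 * (((a - b : ZMod 2)).val : ZMod 4) := by decide
  exact this _ _

lemma polyDbl_add (p q : Polynomial (ZMod 2)) :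
    polyDbl (p + q) = polyDbl p + polyDbl q := by
  ext n
  simp only [coeff_add, coeff_polyDbl]
  have : ∀ a b : ZMod 2, 2 * (((a + b : ZMod 2)).val : ZMod 4)
      = 2 * ((a:ZMod 2).val : ZMod 4) + 2 * (b.val : ZMod 4) := by decide
  exact this _ _

lemma polyDbl_eq_zero {p : Polynomial (ZMod 2)} (h : polyDbl p = 0) : p = 0 := by
  ext n
  have := congrArg (fun q => Polynomial.coeff q n) h
  simp only [coeff_polyDbl, coeff_zero] at this
  have h2 : ∀ a : ZMod 2, 2 * ((a:ZMod 2).val : ZMod 4) = 0 → a = 0 := by decide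
  simpa using h2 _ this

lemma polyDbl_degree_le (p : Polynomial (ZMod 2)) : (polyDbl p).degree ≤ p.degree := by
  refine Polynomial.degree_le_iff_coeff_zero _ _ |>.mpr fun k hk => ?_
  rw [coeff_polyDbl, coeff_eq_zero_of_degree_lt hk]
  simp

lemma iota_injective {m : ℕ} (hm : 0 < m) : Function.Injective (iota m) := by
  intro r r' hrr
  have hdvd : fm4 m ∣ polyDbl (rep2 m r) - polyDbl (rep2 m r') := by
    rwa [iota, iota, mk4, Ideal.Quotient.mk_eq_mk_iff_sub_mem, Ideal.mem_span_singleton] at hrr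
  rw [polyDbl_sub] at hdvd
  have hz : polyDbl (rep2 m r - rep2 m r') = 0 := by
    obtain ⟨c, hc⟩ := hdvd
    rcases eq_or_ne c 0 with rfl | hcne
    · simpa using hc
    · exfalso
      have hdeg : (polyDbl (rep2 m r - rep2 m r')).degree < (m : WithBot ℕ) := by
        refine lt_of_le_of_lt (polyDbl_degree_le _) ?_
        exact lt_of_le_of_lt (degree_sub_le _ _) (max_lt (rep2_degree_lt hm r) (rep2_degree_lt hm r'))
      rw [hc] at hdeg
      have : (fm4 m * c).degree = c.degree + (fm4 m).degree := by
        rw [mul_comm]; exact (fm4_monic hm).degree_mul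
      rw [this, fm4_degree hm] at hdeg
      have h0 : ((m : WithBot ℕ)) ≤ c.degree + (m : WithBot ℕ) := by
        rw [Polynomial.degree_eq_natDegree hcne]
        exact_mod_cast le_add_self
      exact absurd (lt_of_le_of_lt h0 hdeg) (lt_irrefl _)
  have : rep2 m r = rep2 m r' := sub_eq_zero.mp (polyDbl_eq_zero hz)
  rw [← mk2_rep2 hm r, ← mk2_rep2 hm r', this]

lemma iota_add {m : ℕ} (hm : 0 < m) (x y : R2 m) :
    iota m (x + y) = iota m x + iota m y := by
  have hrep : rep2 m (x + y) = rep2 m x + rep2 m y := by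
    refine eq_of_mk2_eq hm (rep2_degree_lt hm _) ?_ ?_
    · refine lt_of_le_of_lt (degree_add_le _ _) (max_lt (rep2_degree_lt hm x) (rep2_degree_lt hm y))
    · rw [map_add, mk2_rep2 hm, mk2_rep2 hm, mk2_rep2 hm]
  rw [iota, iota, iota, hrep, polyDbl_add, map_add]


lemma mk2_surjective (m : ℕ) : Function.Surjective (mk2 m) :=
  Ideal.Quotient.mk_surjective

lemma mk2_eq_zero_iff {m : ℕ} {p : Polynomial (ZMod 2)} :
    mk2 m p = 0 ↔ fm m ∣ p := by
  rw [mk2, Ideal.Quotient.eq_zero_iff_mem, Ideal.mem_span_singleton]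

/-- The multiplication-by-`g` linear map `Poly → R2 m`. -/
def Lmap (m : ℕ) (g : Polynomial (ZMod 2)) :
    Polynomial (ZMod 2) →ₗ[Polynomial (ZMod 2)] R2 m where
  toFun p := mk2 m (p * g)
  map_add' p q := by rw [add_mul, map_add]
  map_smul' r p := by
    simp only [RingHom.id_apply, smul_eq_mul, Algebra.smul_def,
      Ideal.Quotient.algebraMap_eq]
    show mk2 m (r * p * g) = mk2 m r * mk2 m (p * g)
    rw [← map_mul, mul_assoc]

lemma ker_Lmap {m : ℕ} (hm : 0 < m) {g h : Polynomial (ZMod 2)}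
    (hgne : g ≠ 0) (hfm : fm m = g * h) :
    LinearMap.ker (Lmap m g) = Ideal.span {h} := by
  ext p
  simp only [LinearMap.mem_ker, Ideal.mem_span_singleton]
  show mk2 m (p * g) = 0 ↔ h ∣ p
  rw [mk2_eq_zero_iff, hfm]
  constructor
  · intro hd
    have : h * g ∣ p * g := by rwa [mul_comm g h] at hd
    exact (mul_dvd_mul_iff_right hgne).mp this
  · rintro ⟨c, rfl⟩
    exact ⟨c, by ring⟩

lemma range_Lmap_set {m : ℕ} (g : Polynomial (ZMod 2)) :
    ((LinearMap.range (Lmap m g) : Submodule _ (R2 m)) : Set (R2 m))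
      = (↑(Ideal.span {mk2 m g} : Ideal (R2 m)) : Set (R2 m)) := by
  ext x
  simp only [SetLike.mem_coe, LinearMap.mem_range, Ideal.mem_span_singleton']
  constructor
  · rintro ⟨p, rfl⟩
    exact ⟨mk2 m p, by rw [← map_mul]; rfl⟩
  · rintro ⟨y, rfl⟩
    obtain ⟨p, rfl⟩ := mk2_surjective m y
    exact ⟨p, by rw [← map_mul]; rfl⟩

lemma card_adjoinRoot {h : Polynomial (ZMod 2)} (hne : h ≠ 0) :
    Nat.card (AdjoinRoot h) = 2 ^ h.natDegree := by
  let pb := AdjoinRoot.powerBasis hne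
  rw [Nat.card_congr pb.basis.equivFun.toEquiv, Nat.card_pi]
  have : Nat.card (ZMod 2) = 2 := by simp [Nat.card_eq_fintype_card]
  rw [Finset.prod_const, this, Finset.card_univ, Fintype.card_fin,
    AdjoinRoot.powerBasis_dim hne]

lemma card_span {m : ℕ} (hm : 0 < m) {g h : Polynomial (ZMod 2)}
    (hgne : g ≠ 0) (hhne : h ≠ 0) (hfm : fm m = g * h) :
    Nat.card (↑(Ideal.span {mk2 m g} : Ideal (R2 m)) : Set (R2 m)) = 2 ^ h.natDegree := by
  have e1 := (LinearMap.quotKerEquivRange (Lmap m g)).toEquiv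
  have hcard1 : Nat.card (Polynomial (ZMod 2) ⧸ LinearMap.ker (Lmap m g))
      = Nat.card (LinearMap.range (Lmap m g)) := Nat.card_congr e1
  have hker : LinearMap.ker (Lmap m g) = Ideal.span {h} := ker_Lmap hm hgne hfm
  have hcard2 : Nat.card (Polynomial (ZMod 2) ⧸ LinearMap.ker (Lmap m g))
      = Nat.card (AdjoinRoot h) := by
    rw [hker]; rfl
  have hsets := range_Lmap_set (m := m) g
  have hcard3 : Nat.card (LinearMap.range (Lmap m g))
      = Nat.card (↑(Ideal.span {mk2 m g} : Ideal (R2 m)) : Set (R2 m)) := by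
    refine Nat.card_congr (Equiv.setCongr ?_)
    exact hsets
  rw [← hcard3, ← hcard1, hcard2, card_adjoinRoot hhne]



/-- For odd `m > 0` and `a = mk A`, `b = mk B` in `R_m`, with
`g = gcd(A, B, X^m-1)` and `h = (X^m-1)/g`, the map `c ↦ (c·a, 2(c·b))` is a bijection
(indeed an `R_m`-module isomorphism, as the map is given by multiplication) from the ideal
`⟨g⟩` of `R_m` onto `C_{a,b}`; in particular `dim C_{a,b} = deg h`. -/
theorem statement0 (m : ℕ) (hm : Odd m) (hmpos : 0 < m)
    (A B : Polynomial (ZMod 2))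
    (g : Polynomial (ZMod 2))
    (hg : g = EuclideanDomain.gcd A (EuclideanDomain.gcd B (fm m)))
    (h : Polynomial (ZMod 2)) (hh : h = fm m / g) :
    Set.BijOn (fun c : R2 m => ((c * mk2 m A, iota m (c * mk2 m B)) : R2 m × R4 m))
      (↑(Ideal.span {mk2 m g} : Ideal (R2 m)) : Set (R2 m))
      (Cab m (mk2 m A) (mk2 m B)) ∧
    (∀ c c' : R2 m,
      (((c + c') * mk2 m A, iota m ((c + c') * mk2 m B)) : R2 m × R4 m)
        = (c * mk2 m A, iota m (c * mk2 m B)) + (c' * mk2 m A, iota m (c' * mk2 m B))) ∧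
    dimCab m (mk2 m A) (mk2 m B) = h.natDegree := by
  classical
  have hfmne : fm m ≠ 0 := fm_ne_zero hmpos
  have hgdvdfm : g ∣ fm m :=
    hg ▸ (EuclideanDomain.gcd_dvd_right _ _).trans (EuclideanDomain.gcd_dvd_right B (fm m))
  have hgA : g ∣ A := hg ▸ EuclideanDomain.gcd_dvd_left _ _
  have hgB : g ∣ B :=
    hg ▸ (EuclideanDomain.gcd_dvd_right _ _).trans (EuclideanDomain.gcd_dvd_left B (fm m))
  have hgne : g ≠ 0 := fun h0 => hfmne (zero_dvd_iff.mp (h0 ▸ hgdvdfm))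
  have hfm : fm m = g * h := by
    rw [hh]; exact (EuclideanDomain.mul_div_cancel' hgne hgdvdfm).symm
  have hhne : h ≠ 0 := fun h0 => hfmne (by rw [hfm, h0, mul_zero])
  have hsqf : Squarefree (fm m) := by
    have h2 : (m : ZMod 2) ≠ 0 := by
      intro h0
      have := (ZMod.natCast_eq_zero_iff m 2).mp h0
      exact (Nat.not_even_iff_odd.mpr hm) (even_iff_two_dvd.mpr this)
    exact ((Polynomial.X_pow_sub_one_separable_iff).mpr h2).squarefree
  have hcop : IsCoprime g h := by
    rw [← EuclideanDomain.gcd_isUnit_iff]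
    refine hsqf _ ?_
    rw [hfm]
    exact mul_dvd_mul (EuclideanDomain.gcd_dvd_left _ _) (EuclideanDomain.gcd_dvd_right _ _)
  -- Bezout for the triple gcd
  obtain ⟨u₀, v₀, w₀, hbez⟩ : ∃ u v w, g = A * u + B * v + fm m * w := by
    refine ⟨EuclideanDomain.gcdA A (EuclideanDomain.gcd B (fm m)),
      EuclideanDomain.gcdA B (fm m) * EuclideanDomain.gcdB A (EuclideanDomain.gcd B (fm m)),
      EuclideanDomain.gcdB B (fm m) * EuclideanDomain.gcdB A (EuclideanDomain.gcd B (fm m)), ?_⟩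
    rw [hg, EuclideanDomain.gcd_eq_gcd_ab A (EuclideanDomain.gcd B (fm m)),
      EuclideanDomain.gcd_eq_gcd_ab B (fm m)]
    ring
  have hann : ∀ D : Polynomial (ZMod 2), fm m ∣ D * A → fm m ∣ D * B → h ∣ D := by
    intro D hA hB
    have h1 : fm m ∣ D * g := by
      have hD : D * g = (D * A) * u₀ + (D * B) * v₀ + fm m * (D * w₀) := by
        rw [hbez]; ring
      rw [hD]
      exact dvd_add (dvd_add (hA.mul_right u₀) (hB.mul_right v₀)) (dvd_mul_right _ _)
    rw [hfm, mul_comm g h] at h1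
    have h2 : h * g ∣ D * g := h1
    exact (mul_dvd_mul_iff_right hgne).mp h2
  have hmemdvd : ∀ P : Polynomial (ZMod 2),
      mk2 m P ∈ (Ideal.span {mk2 m g} : Ideal (R2 m)) → g ∣ P := by
    intro P hP
    obtain ⟨y, hy⟩ := Ideal.mem_span_singleton'.mp hP
    obtain ⟨Q, rfl⟩ := mk2_surjective m y
    rw [← map_mul] at hy
    have hd : fm m ∣ Q * g - P := by
      rw [← mk2_eq_zero_iff (m := m), map_sub, hy, sub_self]
    have hgd : g ∣ Q * g - P := hgdvdfm.trans hd
    have := dvd_sub (dvd_mul_left g Q) hgd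
    simpa using this
  obtain ⟨u, v, huv⟩ := hcop
  have hkey : ∀ F C : Polynomial (ZMod 2), h ∣ F - C → ∀ P, g ∣ P →
      mk2 m C * mk2 m P = mk2 m F * mk2 m P := by
    intro F C hFC P hgP
    rw [← map_mul, ← map_mul, mk2, Ideal.Quotient.mk_eq_mk_iff_sub_mem,
      Ideal.mem_span_singleton]
    obtain ⟨e, he⟩ := hFC
    obtain ⟨P', rfl⟩ := hgP
    rw [hfm]
    exact ⟨-(e * P'), by linear_combination (-(g * P')) * he⟩
  -- the bijection
  have hbij : Set.BijOn (fun c : R2 m => ((c * mk2 m A, iota m (c * mk2 m B)) : R2 m × R4 m))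
      (↑(Ideal.span {mk2 m g} : Ideal (R2 m)) : Set (R2 m))
      (Cab m (mk2 m A) (mk2 m B)) := by
    refine ⟨fun c _ => ⟨c, rfl⟩, ?_, ?_⟩
    · -- InjOn
      intro c hc c' hc' heq
      have h1 : c * mk2 m A = c' * mk2 m A := congrArg Prod.fst heq
      have h2 : c * mk2 m B = c' * mk2 m B := iota_injective hmpos (congrArg Prod.snd heq)
      obtain ⟨P, rfl⟩ := mk2_surjective m c
      obtain ⟨P', rfl⟩ := mk2_surjective m c'
      have hA : fm m ∣ (P - P') * A := by
        rw [← mk2_eq_zero_iff (m := m), map_mul, map_sub, sub_mul, sub_eq_zero]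
        exact h1
      have hB : fm m ∣ (P - P') * B := by
        rw [← mk2_eq_zero_iff (m := m), map_mul, map_sub, sub_mul, sub_eq_zero]
        exact h2
      have hhD : h ∣ P - P' := hann _ hA hB
      have hgD : g ∣ P - P' := dvd_sub (hmemdvd P hc) (hmemdvd P' hc')
      have hfmD : fm m ∣ P - P' := by
        rw [hfm]; exact IsCoprime.mul_dvd ⟨u, v, huv⟩ hgD hhD
      rw [mk2, Ideal.Quotient.mk_eq_mk_iff_sub_mem, Ideal.mem_span_singleton]
      exact hfmD
    · -- SurjOn
      rintro w ⟨f, rfl⟩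
      obtain ⟨F, rfl⟩ := mk2_surjective m f
      refine ⟨mk2 m (F * (u * g)), ?_, ?_⟩
      · rw [SetLike.mem_coe, Ideal.mem_span_singleton']
        exact ⟨mk2 m (F * u), by rw [← map_mul, mul_assoc]⟩
      · have hdiff : h ∣ F - F * (u * g) := ⟨F * v, by linear_combination (-F) * huv⟩
        have e1 : mk2 m (F * (u * g)) * mk2 m A = mk2 m F * mk2 m A := hkey F _ hdiff A hgA
        have e2 : mk2 m (F * (u * g)) * mk2 m B = mk2 m F * mk2 m B := hkey F _ hdiff B hgB
        simp only [e1, e2]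
  refine ⟨hbij, ?_, ?_⟩
  · intro c c'
    refine Prod.ext ?_ ?_
    · simp [add_mul]
    · show iota m ((c + c') * mk2 m B) = iota m (c * mk2 m B) + iota m (c' * mk2 m B)
      rw [add_mul, iota_add hmpos]
  · have hcard : Nat.card (Cab m (mk2 m A) (mk2 m B))
        = Nat.card (↑(Ideal.span {mk2 m g} : Ideal (R2 m)) : Set (R2 m)) :=
      (Nat.card_congr (hbij.equiv _).symm)
    rw [dimCab, hcard, card_span hmpos hgne hhne hfm, Nat.log_pow one_lt_two]

end
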